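/- Let L₀, …, L_{d+1} be elements of a noncommutative unital associative algebra, L = ∑ L_i. Then the degree-≤2 truncation (in t) of the product E₀(t/2)·E₁(t)···E_{d+1}(t)·E₀(t/2) averaged with the reversed-order product E₀(t/2)·E_{d+1}(t)···E₁(t)·E₀(t/2), where E_i(s) = I + sL_i + (s²/2)L_i², equals I + tL + (t²/2)L². -/
import Mathlib


open Polynomial

/-- Order-2 truncation of `exp(sL)` as a polynomial in the central variable `s`. -/
noncomputable def expTrunc2 {A : Type*} [Ring A] [Algebra ℚ A] (L : A) : Polynomial A :=
  1 + Polynomial.C L * Polynomial.X + Polynomial.C ((1 / 2 : ℚ) • L ^ 2) * Polynomial.X ^ 2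

/-- Order-2 truncation of `exp((t/2)L)` as a polynomial in `t`. -/
noncomputable def expTrunc2Half {A : Type*} [Ring A] [Algebra ℚ A] (L : A) : Polynomial A :=
  1 + Polynomial.C ((1 / 2 : ℚ) • L) * Polynomial.X
    + Polynomial.C ((1 / 8 : ℚ) • L ^ 2) * Polynomial.X ^ 2

section helpers
variable {A : Type*} [Ring A] [Algebra ℚ A]

lemma mul_coeff_one' (P Q : Polynomial A) :
    (P * Q).coeff 1 = P.coeff 0 * Q.coeff 1 + P.coeff 1 * Q.coeff 0 := by
  rw [Polynomial.coeff_mul]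
  rw [Finset.Nat.sum_antidiagonal_eq_sum_range_succ_mk]
  simp [Finset.sum_range_succ]

lemma mul_coeff_two' (P Q : Polynomial A) :
    (P * Q).coeff 2 = P.coeff 0 * Q.coeff 2 + P.coeff 1 * Q.coeff 1 + P.coeff 2 * Q.coeff 0 := by
  rw [Polynomial.coeff_mul]
  rw [Finset.Nat.sum_antidiagonal_eq_sum_range_succ_mk]
  simp [Finset.sum_range_succ, add_assoc]

@[simp] lemma expTrunc2_coeff0 (a : A) : (expTrunc2 a).coeff 0 = 1 := by
  simp [expTrunc2, Polynomial.coeff_one]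
@[simp] lemma expTrunc2_coeff1 (a : A) : (expTrunc2 a).coeff 1 = a := by
  simp [expTrunc2, Polynomial.coeff_one]
@[simp] lemma expTrunc2_coeff2 (a : A) : (expTrunc2 a).coeff 2 = (1/2 : ℚ) • a ^ 2 := by
  simp [expTrunc2, Polynomial.coeff_one]
@[simp] lemma expTrunc2Half_coeff0 (a : A) : (expTrunc2Half a).coeff 0 = 1 := by
  simp [expTrunc2Half, Polynomial.coeff_one]
@[simp] lemma expTrunc2Half_coeff1 (a : A) : (expTrunc2Half a).coeff 1 = (1/2 : ℚ) • a := by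
  simp [expTrunc2Half, Polynomial.coeff_one]
@[simp] lemma expTrunc2Half_coeff2 (a : A) : (expTrunc2Half a).coeff 2 = (1/8 : ℚ) • a ^ 2 := by
  simp [expTrunc2Half, Polynomial.coeff_one]

/-- sum over ordered pairs i < j of l_i * l_j -/
def pairSum : List A → A
  | [] => 0
  | a :: l => a * l.sum + pairSum l

@[simp] lemma pairSum_nil : pairSum ([] : List A) = 0 := rfl
@[simp] lemma pairSum_cons (a : A) (l : List A) :
    pairSum (a :: l) = a * l.sum + pairSum l := rfl

lemma pairSum_append_singleton (l : List A) (a : A) :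
    pairSum (l ++ [a]) = pairSum l + l.sum * a := by
  induction l with
  | nil => simp
  | cons b l ih =>
    simp only [List.cons_append, pairSum_cons, ih, List.sum_cons, List.sum_append,
      List.sum_cons, List.sum_nil]
    noncomm_ring

lemma pairSum_add_reverse (l : List A) :
    pairSum l + pairSum l.reverse = l.sum * l.sum - (l.map (· ^ 2)).sum := by
  induction l with
  | nil => simp
  | cons a l ih =>
    rw [List.reverse_cons, pairSum_append_singleton, List.sum_reverse]
    simp only [pairSum_cons, List.sum_cons, List.map_cons, List.sum_cons]
    have : pairSum l + pairSum l.reverse = l.sum * l.sum - (l.map (· ^ 2)).sum := ih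
    rw [show a * l.sum + pairSum l + (pairSum l.reverse + l.sum * a)
        = (pairSum l + pairSum l.reverse) + (a * l.sum + l.sum * a) by abel, this]
    noncomm_ring

lemma prod_coeff0 (l : List A) : ((l.map expTrunc2).prod).coeff 0 = 1 := by
  induction l with
  | nil => simp
  | cons a l ih => simp [Polynomial.mul_coeff_zero, ih]

lemma prod_coeff1 (l : List A) : ((l.map expTrunc2).prod).coeff 1 = l.sum := by
  induction l with
  | nil => simp [Polynomial.coeff_one]
  | cons a l ih =>
    simp [mul_coeff_one', ih, prod_coeff0, add_comm]

lemma prod_coeff2 (l : List A) :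
    ((l.map expTrunc2).prod).coeff 2
      = (1/2 : ℚ) • (l.map (· ^ 2)).sum + pairSum l := by
  induction l with
  | nil => simp [Polynomial.coeff_one]
  | cons a l ih =>
    simp only [List.map_cons, List.prod_cons, mul_coeff_two', ih, prod_coeff0, prod_coeff1,
      expTrunc2_coeff0, expTrunc2_coeff1, expTrunc2_coeff2, List.map_cons, List.sum_cons,
      pairSum_cons, one_mul, mul_one, smul_add]
    module

end helpers

/-- The symmetrized Ninomiya–Victoir (a) composition
`E₀(t/2) E₁(t) ⋯ E_{d+1}(t) E₀(t/2)` averaged with the reversed-order product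
matches `I + tL + (t²/2)L²` up to order 2 in `t`. -/
theorem ninomiya_victoir_a_second_order {A : Type*} [Ring A] [Algebra ℚ A]
    (d : ℕ) (L : Fin (d + 2) → A) :
    ∀ j ≤ 2,
      ((1 / 2 : ℚ) • (expTrunc2Half (L 0)
          * ((List.finRange (d + 1)).map fun i => expTrunc2 (L i.succ)).prod
          * expTrunc2Half (L 0))
        + (1 / 2 : ℚ) • (expTrunc2Half (L 0)
          * ((List.finRange (d + 1)).reverse.map fun i => expTrunc2 (L i.succ)).prod
          * expTrunc2Half (L 0))).coeff j
      = (expTrunc2 (∑ i, L i)).coeff j := by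
  intro j hj
  set l : List A := (List.finRange (d + 1)).map (fun i => L i.succ) with hl
  have hmid : ((List.finRange (d + 1)).map fun i => expTrunc2 (L i.succ)).prod
      = (l.map expTrunc2).prod := by rw [hl, List.map_map]; rfl
  have hmid' : ((List.finRange (d + 1)).reverse.map fun i => expTrunc2 (L i.succ)).prod
      = (l.reverse.map expTrunc2).prod := by
    rw [hl, ← List.map_reverse, List.map_map]; rfl
  have hsum : ∑ i, L i = L 0 + l.sum := by
    rw [Fin.sum_univ_succ, hl, ← Fin.sum_univ_def]
  rw [hmid, hmid', hsum]
  set s := l.sum with hs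
  set u := (l.map (· ^ 2)).sum with hu
  have hrevsum : l.reverse.sum = s := List.sum_reverse l
  have hrevsq : (l.reverse.map (· ^ 2)).sum = u := by
    rw [List.map_reverse, List.sum_reverse]
  have hq' : pairSum l.reverse = s * s - u - pairSum l := by
    have := pairSum_add_reverse l
    rw [← hs, ← hu] at this
    rw [← this]; abel
  interval_cases j
  · simp only [Polynomial.coeff_add, Polynomial.coeff_smul, Polynomial.mul_coeff_zero,
      prod_coeff0, expTrunc2Half_coeff0, expTrunc2_coeff0, mul_one, one_mul]
    module
  · simp only [Polynomial.coeff_add, Polynomial.coeff_smul, mul_coeff_one',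
      Polynomial.mul_coeff_zero, prod_coeff0, prod_coeff1, expTrunc2Half_coeff0,
      expTrunc2Half_coeff1, expTrunc2_coeff1, hrevsum, one_mul, mul_one]
    module
  · simp only [Polynomial.coeff_add, Polynomial.coeff_smul, mul_coeff_two', mul_coeff_one',
      Polynomial.mul_coeff_zero, prod_coeff0, prod_coeff1, prod_coeff2, expTrunc2Half_coeff0,
      expTrunc2Half_coeff1, expTrunc2Half_coeff2, expTrunc2_coeff2, hrevsum, hrevsq, hq',
      one_mul, mul_one]
    have hexp : (L 0 + s) ^ 2 = L 0 * L 0 + L 0 * s + s * L 0 + s * s := by noncomm_ring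
    have hL2 : (L 0) ^ 2 = L 0 * L 0 := sq (L 0) ▸ rfl
    rw [hexp, pow_two]
    simp only [smul_add, add_mul, mul_add, smul_mul_assoc, mul_smul_comm, smul_smul, smul_sub,
      sub_mul, mul_sub]
    module
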